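/- Let η = diag(1,−1,…,−1) on ℝ^{1+n} with n ≥ 2, let v = (a₀,a₀,0,…,0)ᵀ with a₀ > 0 and w = (b₀,b₁,b₂,0,…,0)ᵀ with b₀² = b₁² + b₂² and b₀ − b₁ > 0. Then the matrix (1/(a₀(b₀−b₁)))(vwᵀ + wvᵀ) − η has eigenvalues 1 with multiplicity n−2, eigenvalue 0 with multiplicity 2, and the eigenvalue (3b₀+b₁)/(b₀−b₁) > 0; in particular it is positive semidefinite. -/

import Mathlib

open Polynomial

/-- The matrix `η = diag(1, -1, …, -1)`. -/
noncomputable def minkMatrix (n : ℕ) : Matrix (Fin (n + 1)) (Fin (n + 1)) ℝ :=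
  Matrix.diagonal (fun i => if i = 0 then 1 else -1)

private lemma charpoly_one' (m : ℕ) : (1 : Matrix (Fin m) (Fin m) ℝ).charpoly = (X - C 1) ^ m := by
  have h : Matrix.charmatrix (1 : Matrix (Fin m) (Fin m) ℝ)
      = Matrix.diagonal (fun _ => (X : ℝ[X]) - C 1) := by
    ext i j
    by_cases h : i = j
    · subst h; simp [Matrix.charmatrix_apply_eq, Matrix.one_apply]
    · simp [Matrix.charmatrix_apply_ne _ _ _ h, Matrix.one_apply_ne h, Matrix.diagonal_apply_ne _ h]
  rw [Matrix.charpoly, h, Matrix.det_diagonal]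
  simp

private noncomputable def Bmat (b₀ b₁ b₂ : ℝ) : Matrix (Fin 3) (Fin 3) ℝ :=
  !![2*b₀/(b₀-b₁) - 1, (b₀+b₁)/(b₀-b₁), b₂/(b₀-b₁);
     (b₀+b₁)/(b₀-b₁), 2*b₁/(b₀-b₁) + 1, b₂/(b₀-b₁);
     b₂/(b₀-b₁), b₂/(b₀-b₁), 1]

set_option maxHeartbeats 1000000 in
private lemma Bmat_charpoly (b₀ b₁ b₂ : ℝ) (hb : b₀ ^ 2 = b₁ ^ 2 + b₂ ^ 2) (hbb : 0 < b₀ - b₁) :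
    (Bmat b₀ b₁ b₂).charpoly = X ^ 2 * (X - C ((3 * b₀ + b₁) / (b₀ - b₁))) := by
  have hd : b₀ - b₁ ≠ 0 := ne_of_gt hbb
  apply Polynomial.funext
  intro t
  rw [Matrix.charpoly, Matrix.det_fin_three]
  simp only [Matrix.charmatrix_apply, Matrix.diagonal_apply, Bmat,
    Matrix.cons_val_zero, Matrix.cons_val_one, Matrix.head_cons, Matrix.head_fin_const,
    Matrix.empty_val', Matrix.cons_val_fin_one, Fin.ext_iff, Fin.val_zero, Fin.val_one,
    Matrix.cons_val]
  norm_num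
  simp only [Matrix.cons_val]
  set u := (b₀ - b₁)⁻¹ with hu_def
  have hu : (b₀ - b₁) * u = 1 := mul_inv_cancel₀ hd
  simp only [div_eq_mul_inv, ← hu_def]
  linear_combination (2*t*u^2) * hb + (t^2 + t - 1 + b₀*u - b₁*u - 3*b₀*t*u - b₁*t*u) * hu

private lemma Bmat_posSemidef (b₀ b₁ b₂ : ℝ) (hb : b₀ ^ 2 = b₁ ^ 2 + b₂ ^ 2)
    (hbb : 0 < b₀ - b₁) : (Bmat b₀ b₁ b₂).PosSemidef := by
  have hd : b₀ - b₁ ≠ 0 := ne_of_gt hbb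
  have hp : 0 ≤ b₀ + b₁ := by nlinarith [sq_nonneg b₂]
  refine Matrix.posSemidef_iff_dotProduct_mulVec.mpr ⟨?_, ?_⟩
  · ext i j
    fin_cases i <;> fin_cases j <;> simp [Bmat, Matrix.conjTranspose_apply]
  · intro x
    simp [dotProduct, Matrix.mulVec, Fin.sum_univ_three, Bmat,
      Matrix.cons_val_zero, Matrix.cons_val_one, Matrix.head_cons, Matrix.cons_val_two,
      Matrix.tail_cons]
    set x0 := x 0; set x1 := x 1; set x2 := x 2
    have key : x0 * ((2*b₀/(b₀-b₁) - 1) * x0 + (b₀+b₁)/(b₀-b₁) * x1 + b₂/(b₀-b₁) * x2)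
        + x1 * ((b₀+b₁)/(b₀-b₁) * x0 + (2*b₁/(b₀-b₁) + 1) * x1 + b₂/(b₀-b₁) * x2)
        + x2 * (b₂/(b₀-b₁) * x0 + b₂/(b₀-b₁) * x1 + x2)
        = ((b₀+b₁)*(x0+x1)^2 + 2*b₂*(x0+x1)*x2 + (b₀-b₁)*x2^2) / (b₀-b₁) := by
      field_simp
      ring
    rw [key]
    apply div_nonneg _ (le_of_lt hbb)
    rcases eq_or_lt_of_le hp with h0 | h0
    · have hb2 : b₂ = 0 := by nlinarith
      rw [← h0, hb2]
      nlinarith [sq_nonneg x2]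
    · nlinarith [sq_nonneg ((b₀+b₁)*(x0+x1) + b₂*x2), sq_nonneg x2]

theorem stmt_9 {n : ℕ} (hn : 2 ≤ n) (a₀ b₀ b₁ b₂ : ℝ)
    (ha : 0 < a₀) (hb : b₀ ^ 2 = b₁ ^ 2 + b₂ ^ 2) (hbb : 0 < b₀ - b₁) :
    letI v : Fin (n + 1) → ℝ := fun i => if i.val = 0 ∨ i.val = 1 then a₀ else 0
    letI w : Fin (n + 1) → ℝ := fun i =>
      if i.val = 0 then b₀ else if i.val = 1 then b₁ else if i.val = 2 then b₂ else 0
    letI M : Matrix (Fin (n + 1)) (Fin (n + 1)) ℝ :=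
      (a₀ * (b₀ - b₁))⁻¹ • (Matrix.vecMulVec v w + Matrix.vecMulVec w v) - minkMatrix n
    M.charpoly = (X - C 1) ^ (n - 2) * X ^ 2 * (X - C ((3 * b₀ + b₁) / (b₀ - b₁))) ∧
      0 < (3 * b₀ + b₁) / (b₀ - b₁) ∧ M.PosSemidef := by
  set v : Fin (n + 1) → ℝ := fun i => if i.val = 0 ∨ i.val = 1 then a₀ else 0 with hv
  set w : Fin (n + 1) → ℝ := fun i =>
    if i.val = 0 then b₀ else if i.val = 1 then b₁ else if i.val = 2 then b₂ else 0 with hw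
  set M : Matrix (Fin (n + 1)) (Fin (n + 1)) ℝ :=
    (a₀ * (b₀ - b₁))⁻¹ • (Matrix.vecMulVec v w + Matrix.vecMulVec w v) - minkMatrix n with hMdef
  have ha' : a₀ ≠ 0 := ne_of_gt ha
  have hd : b₀ - b₁ ≠ 0 := ne_of_gt hbb
  have hp : 0 ≤ b₀ + b₁ := by nlinarith [sq_nonneg b₂]
  have h3 : 3 + (n - 2) = n + 1 := by omega
  let e : Fin 3 ⊕ Fin (n - 2) ≃ Fin (n + 1) := finSumFinEquiv.trans (finCongr h3)
  have heL : ∀ a : Fin 3, (e (Sum.inl a)).val = a.val := fun a => by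
    simp [e, finSumFinEquiv]
  have heR : ∀ k : Fin (n - 2), (e (Sum.inr k)).val = 3 + k.val := fun k => by
    simp [e, finSumFinEquiv]
  have hM_entry : ∀ i j : Fin (n+1), M i j =
      (a₀*(b₀-b₁))⁻¹ * ((if i.val = 0 ∨ i.val = 1 then a₀ else 0) *
        (if j.val = 0 then b₀ else if j.val = 1 then b₁ else if j.val = 2 then b₂ else 0) +
        (if i.val = 0 then b₀ else if i.val = 1 then b₁ else if i.val = 2 then b₂ else 0) *
        (if j.val = 0 ∨ j.val = 1 then a₀ else 0)) -
      (if i.val = j.val then (if i.val = 0 then (1:ℝ) else -1) else 0) := by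
    intro i j
    simp only [hMdef, hv, hw, Matrix.sub_apply, Matrix.smul_apply, Matrix.add_apply,
      Matrix.vecMulVec_apply, minkMatrix, Matrix.diagonal_apply, smul_eq_mul]
    simp [Fin.ext_iff, -Fin.val_eq_zero_iff]
  have hM : M = Matrix.reindex e e
      (Matrix.fromBlocks (Bmat b₀ b₁ b₂) 0 0 (1 : Matrix (Fin (n-2)) (Fin (n-2)) ℝ)) := by
    have key : ∀ a b, M (e a) (e b) =
        Matrix.fromBlocks (Bmat b₀ b₁ b₂) 0 0 (1 : Matrix (Fin (n-2)) (Fin (n-2)) ℝ) a b := by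
      rintro (a | a) (b | b) <;> simp only [hM_entry, heL, heR]
      · fin_cases a <;> fin_cases b <;>
          norm_num [Bmat, Matrix.fromBlocks] <;> field_simp <;> ring
      · have h1 : ¬(3 + (b:ℕ) = 0) := by omega
        have h2 : ¬(3 + (b:ℕ) = 1) := by omega
        have h3' : ¬(3 + (b:ℕ) = 2) := by omega
        have h4 : ¬((a:ℕ) = 3 + (b:ℕ)) := by have := a.isLt; omega
        simp [h1, h2, h3', h4, Matrix.fromBlocks]
      · have h1 : ¬(3 + (a:ℕ) = 0) := by omega
        have h2 : ¬(3 + (a:ℕ) = 1) := by omega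
        have h3' : ¬(3 + (a:ℕ) = 2) := by omega
        have h4 : ¬(3 + (a:ℕ) = (b:ℕ)) := by have := b.isLt; omega
        simp [h1, h2, h3', h4, Matrix.fromBlocks]
      · have h1 : ¬(3 + (a:ℕ) = 0) := by omega
        have h2 : ¬(3 + (a:ℕ) = 1) := by omega
        have h3' : ¬(3 + (a:ℕ) = 2) := by omega
        by_cases hab : a = b
        · subst hab
          simp [h1, h2, h3', Matrix.fromBlocks, Matrix.one_apply]
        · have hne : (a:ℕ) ≠ (b:ℕ) := fun h => hab (Fin.ext h)
          have h5 : ¬(3 + (a:ℕ) = 3 + (b:ℕ)) := by omega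
          simp [h1, h2, h3', h5, hne, Matrix.fromBlocks, Matrix.one_apply_ne hab]
    ext i j
    rw [Matrix.reindex_apply, Matrix.submatrix_apply]
    have h := key (e.symm i) (e.symm j)
    simpa using h
  have hb0 : 0 < b₀ := by linarith
  refine ⟨?_, div_pos (by linarith) hbb, ?_⟩
  · rw [hM, Matrix.charpoly_reindex, Matrix.charpoly_fromBlocks_zero₂₁,
      Bmat_charpoly _ _ _ hb hbb, charpoly_one']
    ring
  · rw [hM, Matrix.reindex_apply]
    apply (Matrix.posSemidef_submatrix_equiv e.symm).mpr
    have h0T : (0 : Matrix (Fin (n-2)) (Fin 3) ℝ) = (0 : Matrix (Fin 3) (Fin (n-2)) ℝ).conjTranspose := by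
      simp
    haveI : Invertible (1 : Matrix (Fin (n-2)) (Fin (n-2)) ℝ) := invertibleOne
    rw [h0T, Matrix.PosDef.fromBlocks₂₂ _ _ Matrix.PosDef.one]
    simpa using Bmat_posSemidef _ _ _ hb hbb
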